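/- Let T be a finite group possessing a unique minimal normal subgroup, and suppose this minimal normal subgroup is non-abelian. Then every faithful finite-dimensional representation V of T over a finite field F has a composition factor on which T acts faithfully; in particular, a faithful representation of T over F of smallest possible dimension is irreducible. -/

import Mathlib

open Module

section Aux
variable {T : Type*} [Group T] {F : Type*} [Field F] {V : Type} [AddCommGroup V] [Module F V]
  (ρ : T →* (V →ₗ[F] V)ˣ)

/-- Invariance of a submodule under the representation. -/
def RepInvariant (U : Submodule F V) : Prop :=
  ∀ t : T, ∀ v ∈ U, ((ρ t : V →ₗ[F] V)) v ∈ U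

lemma inv_apply_apply (t : T) (v : V) : ((ρ t⁻¹ : V →ₗ[F] V)) (((ρ t : V →ₗ[F] V)) v) = v := by
  rw [← Module.End.mul_apply, ← Units.val_mul, ← map_mul, inv_mul_cancel, map_one,
    Units.val_one, Module.End.one_apply]

/-- The kernel of the action on `U₂/U₁`. -/
def repPairKer (U₁ U₂ : Submodule F V) (h₁ : RepInvariant ρ U₁) : Subgroup T where
  carrier := {t | ∀ v ∈ U₂, ((ρ t : V →ₗ[F] V)) v - v ∈ U₁}
  one_mem' := by intro v hv; simp
  mul_mem' := by
    intro a b ha hb v hv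
    have key : ((ρ (a * b) : V →ₗ[F] V)) v - v =
        ((ρ a : V →ₗ[F] V)) (((ρ b : V →ₗ[F] V)) v - v) + (((ρ a : V →ₗ[F] V)) v - v) := by
      rw [map_mul, map_sub]
      simp only [Units.val_mul, Module.End.mul_apply]
      abel
    rw [key]
    exact add_mem (h₁ a _ (hb v hv)) (ha v hv)
  inv_mem' := by
    intro a ha v hv
    have h2 : ((ρ a⁻¹ : V →ₗ[F] V)) (((ρ a : V →ₗ[F] V)) v - v) ∈ U₁ := h₁ _ _ (ha v hv)
    rw [map_sub, inv_apply_apply] at h2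
    have key : ((ρ a⁻¹ : V →ₗ[F] V)) v - v = -(v - ((ρ a⁻¹ : V →ₗ[F] V)) v) := by abel
    rw [key]
    exact neg_mem h2

lemma mem_repPairKer_iff {U₁ U₂ : Submodule F V} {h₁ : RepInvariant ρ U₁} {t : T} :
    t ∈ repPairKer ρ U₁ U₂ h₁ ↔ ∀ v ∈ U₂, ((ρ t : V →ₗ[F] V)) v - v ∈ U₁ := Iff.rfl

lemma repPairKer_normal (U₁ U₂ : Submodule F V) (h₁ : RepInvariant ρ U₁)
    (h₂ : RepInvariant ρ U₂) : (repPairKer ρ U₁ U₂ h₁).Normal := by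
  constructor
  intro t ht g v hv
  have hv' : ((ρ g⁻¹ : V →ₗ[F] V)) v ∈ U₂ := h₂ g⁻¹ v hv
  have e1 : ((ρ g : V →ₗ[F] V)) (((ρ g⁻¹ : V →ₗ[F] V)) v) = v := by
    have := inv_apply_apply ρ g⁻¹ v
    rwa [inv_inv] at this
  have key : ((ρ (g * t * g⁻¹) : V →ₗ[F] V)) v - v =
      ((ρ g : V →ₗ[F] V)) (((ρ t : V →ₗ[F] V)) (((ρ g⁻¹ : V →ₗ[F] V)) v)
        - ((ρ g⁻¹ : V →ₗ[F] V)) v) := by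
    rw [map_sub, e1]
    congr 1
    rw [map_mul, map_mul]
    simp [Units.val_mul, Module.End.mul_apply]
  rw [key]
  exact h₁ g _ (ht _ hv')

end Aux

section Main
variable {T : Type*} [Group T] {F : Type*} [Field F] {V : Type} [AddCommGroup V] [Module F V]
  [FiniteDimensional F V] (ρ : T →* (V →ₗ[F] V)ˣ)

lemma chain_aux (K : Subgroup T)
    (hmin : ∀ N : Subgroup T, N.Normal → N ≠ ⊥ → K ≤ N) :
    ∀ n : ℕ, ∀ W : Submodule F V, RepInvariant ρ W → finrank F W ≤ n →
    (∃ U₁ U₂ : Submodule F V, RepInvariant ρ U₁ ∧ RepInvariant ρ U₂ ∧ U₁ < U₂ ∧ U₂ ≤ W ∧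
      (∀ U : Submodule F V, RepInvariant ρ U → U₁ ≤ U → U ≤ U₂ → U = U₁ ∨ U = U₂) ∧
      (∀ t : T, (∀ v ∈ U₂, ((ρ t : V →ₗ[F] V)) v - v ∈ U₁) → t = 1)) ∨
    (∀ t ∈ K, ∀ v ∈ W, ((((ρ t : V →ₗ[F] V)) - 1) ^ n) v = 0) := by
  intro n
  induction n with
  | zero =>
    intro W _ hr
    right
    intro t _ v hv
    have hW : W = ⊥ := Submodule.finrank_eq_zero.mp (Nat.le_zero.mp hr)
    rw [hW, Submodule.mem_bot] at hv
    simp [hv]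
  | succ n ih =>
    intro W hW hr
    by_cases hWbot : W = ⊥
    · right
      intro t _ v hv
      rw [hWbot, Submodule.mem_bot] at hv
      simp [hv]
    · have hSne : ({U : Submodule F V | RepInvariant ρ U ∧ U < W}).Nonempty :=
        ⟨⊥, fun t v hv => by
            rw [Submodule.mem_bot] at hv ⊢; simp [hv],
          bot_lt_iff_ne_bot.mpr hWbot⟩
      obtain ⟨U, ⟨hUinv, hUlt⟩, hUmax⟩ :=
        (set_has_maximal_iff_noetherian.mpr inferInstance) _ hSne
      have hUr : finrank F U ≤ n := by
        have := Submodule.finrank_lt_finrank_of_lt hUlt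
        omega
      rcases ih U hUinv hUr with h | h
      · obtain ⟨U₁, U₂, a, b, c, d, e, f⟩ := h
        exact Or.inl ⟨U₁, U₂, a, b, c, d.trans hUlt.le, e, f⟩
      · by_cases hH : repPairKer ρ U W hUinv = ⊥
        · left
          refine ⟨U, W, hUinv, hW, hUlt, le_refl _, ?_, ?_⟩
          · intro U' hU' hle1 hle2
            by_cases hU'W : U' = W
            · exact Or.inr hU'W
            · left
              by_contra hne
              exact hUmax U' ⟨hU', lt_of_le_of_ne hle2 hU'W⟩ (lt_of_le_of_ne hle1 (Ne.symm hne))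
          · intro t ht
            have : t ∈ repPairKer ρ U W hUinv := ht
            rw [hH, Subgroup.mem_bot] at this
            exact this
        · have hKH : K ≤ repPairKer ρ U W hUinv :=
            hmin _ (repPairKer_normal ρ U W hUinv hW) hH
          right
          intro t ht v hv
          have h1 : ((ρ t : V →ₗ[F] V)) v - v ∈ U := hKH ht v hv
          have h2 := h t ht _ h1
          rw [pow_succ, Module.End.mul_apply, LinearMap.sub_apply, Module.End.one_apply]
          exact h2

end Main

lemma part1 (T : Type*) [Group T] [Finite T] (K : Subgroup T) [K.Normal]
    (hKbot : K ≠ ⊥)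
    (hmin : ∀ N : Subgroup T, N.Normal → N ≠ ⊥ → K ≤ N)
    (hKna : ¬ ∀ x y : ↥K, x * y = y * x)
    (F : Type*) [Field F] [Fintype F]
    (V : Type) [AddCommGroup V] [Module F V] (hfd : FiniteDimensional F V)
    (ρ : T →* (V →ₗ[F] V)ˣ) (hρ : Function.Injective ρ) :
    ∃ U₁ U₂ : Submodule F V,
      (∀ t : T, ∀ v ∈ U₁, ((ρ t : V →ₗ[F] V)) v ∈ U₁) ∧
      (∀ t : T, ∀ v ∈ U₂, ((ρ t : V →ₗ[F] V)) v ∈ U₂) ∧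
      U₁ < U₂ ∧
      (∀ U : Submodule F V, (∀ t : T, ∀ v ∈ U, ((ρ t : V →ₗ[F] V)) v ∈ U) →
        U₁ ≤ U → U ≤ U₂ → U = U₁ ∨ U = U₂) ∧
      (∀ t : T, (∀ v ∈ U₂, ((ρ t : V →ₗ[F] V)) v - v ∈ U₁) → t = 1) := by
  classical
  -- V is nontrivial
  have hVnt : Nontrivial V := by
    by_contra h
    rw [not_nontrivial_iff_subsingleton] at h
    apply hKbot
    rw [Subgroup.eq_bot_iff_forall]
    intro x _
    apply hρ
    apply Units.ext
    exact Subsingleton.elim _ _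
  rcases chain_aux ρ K hmin (finrank F V) ⊤ (fun t v _ => Submodule.mem_top)
      (le_of_eq (finrank_top F V)) with h | h
  · obtain ⟨U₁, U₂, a, b, c, _, e, f⟩ := h
    exact ⟨U₁, U₂, a, b, c, e, f⟩
  · exfalso
    set p := ringChar F with hp
    haveI hpp : Fact p.Prime := ⟨CharP.char_is_prime F p⟩
    haveI : Nontrivial (V →ₗ[F] V) := by
      obtain ⟨v, hv⟩ := exists_ne (0 : V)
      exact ⟨1, 0, fun heq => hv (by simpa using congrFun (congrArg DFunLike.coe heq) v)⟩
    haveI : CharP (V →ₗ[F] V) p :=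
      charP_of_injective_algebraMap (algebraMap F (Module.End F V)).injective p
    set nV := finrank F V with hnV
    have hle : nV ≤ p ^ nV := (Nat.lt_pow_self hpp.out.one_lt : nV < p ^ nV).le
    have hKp : IsPGroup p ↥K := by
      intro g
      refine ⟨nV, ?_⟩
      have hnil : (((ρ (g : T) : V →ₗ[F] V)) - 1) ^ nV = 0 :=
        LinearMap.ext fun v => h (g : T) g.2 v Submodule.mem_top
      have hnil2 : (((ρ (g : T) : V →ₗ[F] V)) - 1) ^ (p ^ nV) = 0 := by
        have heq : p ^ nV = (p ^ nV - nV) + nV := by omega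
        rw [heq, pow_add, hnil, mul_zero]
      have hpow : ((ρ (g : T) : V →ₗ[F] V)) ^ (p ^ nV) = 1 := by
        have hc : Commute (((ρ (g : T) : V →ₗ[F] V)) - 1) (1 : V →ₗ[F] V) :=
          Commute.one_right _
        calc ((ρ (g : T) : V →ₗ[F] V)) ^ (p ^ nV)
            = ((((ρ (g : T) : V →ₗ[F] V)) - 1) + 1) ^ (p ^ nV) := by rw [sub_add_cancel]
          _ = (((ρ (g : T) : V →ₗ[F] V)) - 1) ^ (p ^ nV) + 1 ^ (p ^ nV) :=
              add_pow_char_pow_of_commute p nV hc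
          _ = 1 := by rw [hnil2, one_pow, zero_add]
      have hρg : ρ ((g : T) ^ (p ^ nV)) = 1 := by
        apply Units.ext
        rw [map_pow, Units.val_pow_eq_pow_val, hpow, Units.val_one]
      have hg1 : (g : T) ^ (p ^ nV) = 1 := hρ (by rw [hρg, map_one])
      ext
      simpa using hg1
    haveI : Nontrivial ↥K := (Subgroup.nontrivial_iff_ne_bot K).mpr hKbot
    haveI := hKp.center_nontrivial
    obtain ⟨z, hz⟩ := exists_ne (1 : Subgroup.center ↥K)
    set Z : Subgroup T := K ⊓ Subgroup.centralizer (K : Set T) with hZ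
    have hZn : Z.Normal := by
      constructor
      intro x hx g
      refine ⟨‹K.Normal›.conj_mem x hx.1 g, Subgroup.mem_centralizer_iff.mpr ?_⟩
      intro h hh
      have h' : g⁻¹ * h * g ∈ K := by
        have := ‹K.Normal›.conj_mem h hh g⁻¹
        simpa using this
      have hc := (Subgroup.mem_centralizer_iff.mp hx.2) _ h'
      have hgoal : g * (g⁻¹ * h * g * x) * g⁻¹ = g * (x * (g⁻¹ * h * g)) * g⁻¹ := by
        rw [hc]
      calc h * (g * x * g⁻¹) = g * (g⁻¹ * h * g * x) * g⁻¹ := by group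
        _ = g * (x * (g⁻¹ * h * g)) * g⁻¹ := hgoal
        _ = g * x * g⁻¹ * h := by group
    have hZbot : Z ≠ ⊥ := by
      intro hbot
      have hzv : ((z : ↥K) : T) ∈ Z := by
        refine ⟨(z : ↥K).2, Subgroup.mem_centralizer_iff.mpr ?_⟩
        intro h hh
        have := (Subgroup.mem_center_iff.mp z.2) ⟨h, hh⟩
        exact congrArg Subtype.val this
      rw [hbot, Subgroup.mem_bot] at hzv
      apply hz
      ext
      simpa using hzv
    have hKZ : K ≤ Z := hmin Z hZn hZbot
    apply hKna
    intro x y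
    have hx := Subgroup.mem_centralizer_iff.mp (hKZ x.2).2
    have := hx (y : T) y.2
    ext
    simpa using this.symm

theorem statement5 (T : Type*) [Group T] [Finite T] (K : Subgroup T) [K.Normal]
    (hKbot : K ≠ ⊥)
    (hmin : ∀ N : Subgroup T, N.Normal → N ≠ ⊥ → K ≤ N)
    (hKna : ¬ ∀ x y : ↥K, x * y = y * x)
    (F : Type*) [Field F] [Fintype F] :
    (∀ (V : Type) [AddCommGroup V] [Module F V] (_ : FiniteDimensional F V)
        (ρ : T →* (V →ₗ[F] V)ˣ), Function.Injective ρ →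
      ∃ U₁ U₂ : Submodule F V,
        (∀ t : T, ∀ v ∈ U₁, ((ρ t : V →ₗ[F] V)) v ∈ U₁) ∧
        (∀ t : T, ∀ v ∈ U₂, ((ρ t : V →ₗ[F] V)) v ∈ U₂) ∧
        U₁ < U₂ ∧
        (∀ U : Submodule F V, (∀ t : T, ∀ v ∈ U, ((ρ t : V →ₗ[F] V)) v ∈ U) →
          U₁ ≤ U → U ≤ U₂ → U = U₁ ∨ U = U₂) ∧
        (∀ t : T, (∀ v ∈ U₂, ((ρ t : V →ₗ[F] V)) v - v ∈ U₁) → t = 1)) ∧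
    (∀ (V : Type) [AddCommGroup V] [Module F V] (_ : FiniteDimensional F V)
        (ρ : T →* (V →ₗ[F] V)ˣ), Function.Injective ρ →
      (∀ (W : Type) [AddCommGroup W] [Module F W] (_ : FiniteDimensional F W)
          (σ : T →* (W →ₗ[F] W)ˣ), Function.Injective σ →
        Module.finrank F V ≤ Module.finrank F W) →
      ∀ X : Submodule F V, (∀ t : T, ∀ v ∈ X, ((ρ t : V →ₗ[F] V)) v ∈ X) →
        X = ⊥ ∨ X = ⊤) := by
  constructor
  · intro V _ _ hfd ρ hρ
    exact part1 T K hKbot hmin hKna F V hfd ρ hρ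
  · intro V _ _ hfd ρ hρ hminimal X hX
    obtain ⟨U₁, U₂, hU₁, hU₂, hlt, hsimp, hfaith⟩ := part1 T K hKbot hmin hKna F V hfd ρ hρ
    haveI := hfd
    set Q : Submodule F ↥U₂ := U₁.comap U₂.subtype with hQdef
    let f : T → (↥U₂ →ₗ[F] ↥U₂) := fun t =>
      ((ρ t : V →ₗ[F] V)).restrict (fun x hx => hU₂ t x hx)
    have hf_coe : ∀ t (x : ↥U₂), ((f t x : ↥U₂) : V) = ((ρ t : V →ₗ[F] V)) (x : V) :=
      fun t x => LinearMap.restrict_coe_apply _ _ _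
    have hfQ : ∀ t, Q ≤ Q.comap (f t) := by
      intro t x hx
      have hx' : ((x : ↥U₂) : V) ∈ U₁ := hx
      show ((f t x : ↥U₂) : V) ∈ U₁
      rw [hf_coe]
      exact hU₁ t _ hx'
    let g : T → ((↥U₂ ⧸ Q) →ₗ[F] (↥U₂ ⧸ Q)) := fun t => Submodule.mapQ Q Q (f t) (hfQ t)
    have hg_mk : ∀ t (x : ↥U₂),
        g t (Submodule.Quotient.mk x) = Submodule.Quotient.mk (f t x) :=
      fun t x => rfl
    let τ : T →* ((↥U₂ ⧸ Q) →ₗ[F] (↥U₂ ⧸ Q)) :=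
      { toFun := g
        map_one' := by
          apply LinearMap.ext; intro w
          obtain ⟨x, rfl⟩ := Submodule.Quotient.mk_surjective Q w
          rw [hg_mk]
          show _ = Submodule.Quotient.mk x
          congr 1
          ext
          rw [hf_coe]
          simp
        map_mul' := by
          intro s t
          apply LinearMap.ext; intro w
          obtain ⟨x, rfl⟩ := Submodule.Quotient.mk_surjective Q w
          rw [Module.End.mul_apply, hg_mk, hg_mk, hg_mk]
          congr 1
          ext
          rw [hf_coe, hf_coe, hf_coe, map_mul]
          simp [Units.val_mul, Module.End.mul_apply] }
    let σ : T →* ((↥U₂ ⧸ Q) →ₗ[F] (↥U₂ ⧸ Q))ˣ := τ.toHomUnits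
    have hσinj : Function.Injective σ := by
      rw [injective_iff_map_eq_one]
      intro t ht
      apply hfaith t
      intro v hv
      have hgt : g t = (1 : (↥U₂ ⧸ Q) →ₗ[F] (↥U₂ ⧸ Q)) := by
        exact congrArg Units.val ht
      have hx : g t (Submodule.Quotient.mk (⟨v, hv⟩ : ↥U₂)) =
          Submodule.Quotient.mk (⟨v, hv⟩ : ↥U₂) := by
        rw [hgt, Module.End.one_apply]
      rw [hg_mk] at hx
      have hmemQ := (Submodule.Quotient.eq Q).mp hx
      have hmem : ((f t ⟨v, hv⟩ - ⟨v, hv⟩ : ↥U₂) : V) ∈ U₁ := hmemQ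
      rw [AddSubgroupClass.coe_sub, hf_coe] at hmem
      exact hmem
    have hdim := hminimal (↥U₂ ⧸ Q) inferInstance σ hσinj
    have h1 : finrank F (↥U₂ ⧸ Q) + finrank F Q = finrank F ↥U₂ :=
      Submodule.finrank_quotient_add_finrank Q
    have h2 : finrank F ↥U₂ ≤ finrank F V := Submodule.finrank_le U₂
    have hQ0 : finrank F Q = 0 := by omega
    have h3 : finrank F ↥U₂ = finrank F V := by omega
    have hU₂top : U₂ = ⊤ := Submodule.eq_top_of_finrank_eq h3
    have hQbot : Q = ⊥ := Submodule.finrank_eq_zero.mp hQ0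
    have hU₁bot : U₁ = ⊥ := by
      rw [eq_bot_iff]
      intro v hv
      have hvQ : (⟨v, hlt.le hv⟩ : ↥U₂) ∈ Q := hv
      rw [hQbot, Submodule.mem_bot] at hvQ
      have : v = 0 := congrArg Subtype.val hvQ
      simp [this]
    rcases hsimp X hX (hU₁bot ▸ bot_le) (hU₂top ▸ le_top) with h | h
    · left; rw [h, hU₁bot]
    · right; rw [h, hU₂top]
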